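/- Let G be a finite simple graph of order n ≥ 3 and let k be an integer with 3 ≤ k ≤ n. Then C_k(G) = n − k + 2 if and only if n = k, or G is isomorphic to the join H ∨ K_{n−k+1} for some graph H of order k − 1. -/

import Mathlib

open SimpleGraph

/-- A set `S` is a `k`-dominating set of `G` if every vertex outside `S`
has at least `k` neighbors in `S`. -/
def KDominatingSet {V : Type*} (G : SimpleGraph V) (k : ℕ) (S : Set V) : Prop :=
  ∀ v ∉ S, k ≤ (S ∩ G.neighborSet v).ncard

/-- Two disjoint sets `A` and `B` form a `k`-coalition in `G` if neither is a
`k`-dominating set of `G` but their union is. -/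
def KCoalition {V : Type*} (G : SimpleGraph V) (k : ℕ) (A B : Set V) : Prop :=
  Disjoint A B ∧ ¬ KDominatingSet G k A ∧ ¬ KDominatingSet G k B ∧
    KDominatingSet G k (A ∪ B)

/-- A `k`-coalition partition of `G` is a partition of the vertex set in which every
part is either a `k`-dominating set of cardinality `k` or forms a `k`-coalition with
another part. -/
def KCoalitionPartition {V : Type*} (G : SimpleGraph V) (k : ℕ) (P : Finset (Set V)) : Prop :=
  (∀ A ∈ P, A.Nonempty) ∧
  (P : Set (Set V)).PairwiseDisjoint id ∧
  (⋃ A ∈ P, A) = (Set.univ : Set V) ∧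
  ∀ A ∈ P, (KDominatingSet G k A ∧ A.ncard = k) ∨
    ∃ B ∈ P, B ≠ A ∧ KCoalition G k A B

/-- The `k`-coalition number of `G`: the maximum cardinality of a
`k`-coalition partition of `G`. -/
noncomputable def kCoalitionNumber {V : Type*} (G : SimpleGraph V) (k : ℕ) : ℕ :=
  sSup {n | ∃ P : Finset (Set V), KCoalitionPartition G k P ∧ P.card = n}

/-- The join of two graphs: their disjoint union together with all edges between them. -/
def graphJoin {α β : Type*} (H : SimpleGraph α) (K : SimpleGraph β) : SimpleGraph (α ⊕ β) :=
  (H ⊕g K) ⊔ completeBipartiteGraph α β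

set_option linter.unusedSectionVars false
set_option linter.unusedVariables false

lemma graphJoin_adj_inl_inl {α β} (H : SimpleGraph α) (K : SimpleGraph β) (a b) :
    (graphJoin H K).Adj (.inl a) (.inl b) ↔ H.Adj a b := by simp [graphJoin]

lemma graphJoin_adj_inl_inr {α β} (H : SimpleGraph α) (K : SimpleGraph β) (a b) :
    (graphJoin H K).Adj (.inl a) (.inr b) := by simp [graphJoin]

lemma graphJoin_adj_inr_inl {α β} (H : SimpleGraph α) (K : SimpleGraph β) (a b) :
    (graphJoin H K).Adj (.inr a) (.inl b) := by simp [graphJoin]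

lemma graphJoin_adj_inr_inr {α β} (H : SimpleGraph α) (K : SimpleGraph β) (a b) :
    (graphJoin H K).Adj (.inr a) (.inr b) ↔ K.Adj a b := by simp [graphJoin]

section Aux

variable {V : Type*} [Fintype V] {G : SimpleGraph V} {k : ℕ} {S A B : Set V}

/-- A k-dominating set other than the whole vertex set has at least k elements. -/
lemma kdom_ncard_ge (hS : KDominatingSet G k S) (h : S ≠ Set.univ) : k ≤ S.ncard := by
  obtain ⟨v, hv⟩ : ∃ v, v ∉ S := by
    by_contra hc
    push_neg at hc
    exact h (Set.eq_univ_of_forall hc)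
  exact (hS v hv).trans (Set.ncard_le_ncard Set.inter_subset_left S.toFinite)

/-- A k-dominating set of cardinality exactly k is contained in the neighborhood of
every outside vertex. -/
lemma kdom_subset_nbr (hS : KDominatingSet G k S) (hcard : S.ncard = k) {v : V}
    (hv : v ∉ S) : S ⊆ G.neighborSet v := by
  have h1 : k ≤ (S ∩ G.neighborSet v).ncard := hS v hv
  have h2 : S ∩ G.neighborSet v = S :=
    Set.eq_of_subset_of_ncard_le Set.inter_subset_left (by omega) S.toFinite
  rw [← h2]
  exact Set.inter_subset_right

/-- Pairwise disjoint nonempty subsets of T: there are at most T.ncard of them. -/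
lemma card_le_ncard_of_disj (Q : Finset (Set V)) (hne : ∀ A ∈ Q, A.Nonempty)
    (hdisj : (Q : Set (Set V)).PairwiseDisjoint id) (T : Set V)
    (hsub : ∀ A ∈ Q, A ⊆ T) : Q.card ≤ T.ncard := by
  classical
  rcases Q.eq_empty_or_nonempty with rfl | ⟨A0, hA0⟩
  · simp
  have : Nonempty V := ⟨(hne A0 hA0).some⟩
  have hft : T.Finite := T.toFinite
  rw [Set.ncard_eq_toFinset_card T hft]
  refine Finset.card_le_card_of_injOn
    (fun A => if h : A.Nonempty then h.some else Classical.arbitrary V) ?_ ?_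
  · intro A hA
    have h := hne A hA
    simp only [dif_pos h, Set.Finite.mem_toFinset]
    exact hft.mem_toFinset.mpr (hsub A hA h.some_mem)
  · intro A hA B hB hAB
    by_contra hne'
    have h1 := hne A (by simpa using hA)
    have h2 := hne B (by simpa using hB)
    simp only [dif_pos h1, dif_pos h2] at hAB
    have hd := hdisj (by simpa using hA) (by simpa using hB) hne'
    exact (Set.disjoint_left.mp hd h1.some_mem) (hAB ▸ h2.some_mem)

/-- Any part other than A is contained in the complement of A. -/
lemma part_subset_compl {P : Finset (Set V)}
    (hdisj : (P : Set (Set V)).PairwiseDisjoint id) {A C : Set V}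
    (hA : A ∈ P) (hC : C ∈ P) (hCA : C ≠ A) : C ⊆ Aᶜ := by
  intro x hx
  exact fun hxA => Set.disjoint_left.mp (hdisj hC hA hCA) hx hxA

lemma partition_card_le {P : Finset (Set V)} (hP : KCoalitionPartition G k P)
    (hk3 : 3 ≤ k) (hkn : k ≤ Fintype.card V) :
    P.card ≤ Fintype.card V - k + 2 := by
  classical
  obtain ⟨hne, hdisj, hcov, hpart⟩ := hP
  by_cases hp : P.card ≤ 2
  · omega
  push_neg at hp
  obtain ⟨A, hA⟩ : P.Nonempty := Finset.card_pos.mp (by omega)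
  rcases hpart A hA with ⟨hdom, hcard⟩ | ⟨B, hB, hBA, hco⟩
  · have h1 : (P.erase A).card ≤ (Aᶜ).ncard := by
      refine card_le_ncard_of_disj _ (fun C hC => hne C (Finset.mem_of_mem_erase hC))
        (hdisj.subset (by simp)) _ ?_
      intro C hC
      exact part_subset_compl hdisj hA (Finset.mem_of_mem_erase hC)
        (Finset.ne_of_mem_erase hC)
    have h2 : A.ncard + (Aᶜ).ncard = Fintype.card V := by
      rw [Set.ncard_add_ncard_compl A A.toFinite (Aᶜ).toFinite, Nat.card_eq_fintype_card]
    have h3 : (P.erase A).card = P.card - 1 := Finset.card_erase_of_mem hA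
    omega
  · have hB' : B ∈ P.erase A := Finset.mem_erase.mpr ⟨hBA, hB⟩
    have hQcard : ((P.erase A).erase B).card = P.card - 2 := by
      rw [Finset.card_erase_of_mem hB', Finset.card_erase_of_mem hA]
      omega
    obtain ⟨C, hC⟩ : ((P.erase A).erase B).Nonempty := Finset.card_pos.mp (by omega)
    have hCP : C ∈ P := Finset.mem_of_mem_erase (Finset.mem_of_mem_erase hC)
    have hCA : C ≠ A := Finset.ne_of_mem_erase (Finset.mem_of_mem_erase hC)
    have hCB : C ≠ B := Finset.ne_of_mem_erase hC
    obtain ⟨c, hc⟩ := hne C hCP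
    have hcAB : c ∉ A ∪ B := by
      rintro (h | h)
      · exact part_subset_compl hdisj hA hCP hCA hc h
      · exact part_subset_compl hdisj hB hCP hCB hc h
    have hUnion : k ≤ (A ∪ B).ncard :=
      kdom_ncard_ge hco.2.2.2 (fun h => hcAB (h ▸ Set.mem_univ c))
    have h1 : ((P.erase A).erase B).card ≤ ((A ∪ B)ᶜ).ncard := by
      refine card_le_ncard_of_disj _
        (fun D hD => hne D (Finset.mem_of_mem_erase (Finset.mem_of_mem_erase hD)))
        (hdisj.subset (by intro x hx; simp only [Finset.coe_erase, Set.mem_diff,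
          Finset.mem_coe] at hx; exact hx.1.1)) _ ?_
      intro D hD
      have hDP : D ∈ P := Finset.mem_of_mem_erase (Finset.mem_of_mem_erase hD)
      have hDA : D ≠ A := Finset.ne_of_mem_erase (Finset.mem_of_mem_erase hD)
      have hDB : D ≠ B := Finset.ne_of_mem_erase hD
      intro x hx
      rw [Set.mem_compl_iff, Set.mem_union]
      push_neg
      exact ⟨part_subset_compl hdisj hA hDP hDA hx, part_subset_compl hdisj hB hDP hDB hx⟩
    have h2 : (A ∪ B).ncard + ((A ∪ B)ᶜ).ncard = Fintype.card V := by
      rw [Set.ncard_add_ncard_compl _ (A ∪ B).toFinite ((A ∪ B)ᶜ).toFinite,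
        Nat.card_eq_fintype_card]
    omega

lemma universal_of_iso {m : ℕ} {H : SimpleGraph (Fin (k - 1))} (hk3 : 3 ≤ k)
    (φ : G ≃g graphJoin H (⊤ : SimpleGraph (Fin m))) :
    ∃ U : Set V, U.ncard = k - 1 ∧ ∀ v ∉ U, ∀ u, u ≠ v → G.Adj v u := by
  classical
  refine ⟨Set.range (fun i => φ.symm (Sum.inl i)), ?_, ?_⟩
  · rw [← Set.image_univ, Set.ncard_image_of_injective _
      (fun i j h => Sum.inl.inj (φ.symm.injective h)), Set.ncard_univ,
      Nat.card_eq_fintype_card, Fintype.card_fin]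
  · intro v hv u hu
    obtain ⟨j, hj⟩ : ∃ j, φ v = Sum.inr j := by
      cases h : φ v with
      | inl i => exact absurd ⟨i, by show φ.symm (Sum.inl i) = v; rw [← h, φ.symm_apply_apply]⟩ hv
      | inr j => exact ⟨j, rfl⟩
    have key : (graphJoin H (⊤ : SimpleGraph (Fin m))).Adj (φ v) (φ u) := by
      cases h : φ u with
      | inl i => rw [hj]; exact graphJoin_adj_inr_inl _ _ _ _
      | inr j' =>
        rw [hj, graphJoin_adj_inr_inr]
        have : j ≠ j' := by
          intro hjj
          exact hu (φ.injective (by rw [h, hj, hjj]))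
        exact this
    exact φ.map_adj_iff.mp key

lemma not_kdom_small {S : Set V} {v : V} (hv : v ∉ S) (hS : S.ncard < k) :
    ¬ KDominatingSet G k S := by
  intro hdom
  have h1 := hdom v hv
  have h2 := Set.ncard_le_ncard (Set.inter_subset_left (t := G.neighborSet v)) S.toFinite
  omega

lemma partition_of_universal {U : Set V} (hU : U.ncard = k - 1) (hk3 : 3 ≤ k)
    (hkn : k ≤ Fintype.card V) (hn : 3 ≤ Fintype.card V)
    (huniv : ∀ v ∉ U, ∀ u, u ≠ v → G.Adj v u) :
    ∃ P : Finset (Set V), KCoalitionPartition G k P ∧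
      P.card = Fintype.card V - k + 2 := by
  classical
  have hcompl : U.ncard + (Uᶜ).ncard = Fintype.card V := by
    rw [Set.ncard_add_ncard_compl U U.toFinite (Uᶜ).toFinite, Nat.card_eq_fintype_card]
  have hUc : (Uᶜ).ncard = Fintype.card V - k + 1 := by omega
  have hUcfin : (Uᶜ).Finite := Set.toFinite _
  set P : Finset (Set V) := insert U (hUcfin.toFinset.image fun v => ({v} : Set V)) with hP
  have hmem : ∀ A : Set V, A ∈ P ↔ A = U ∨ ∃ v ∉ U, A = {v} := by
    intro A
    simp only [hP, Finset.mem_insert, Finset.mem_image, Set.Finite.mem_toFinset,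
      Set.mem_compl_iff]
    constructor
    · rintro (h | ⟨v, hv, rfl⟩)
      · exact Or.inl h
      · exact Or.inr ⟨v, hv, rfl⟩
    · rintro (h | ⟨v, hv, rfl⟩)
      · exact Or.inl h
      · exact Or.inr ⟨v, hv, rfl⟩
  have hUnotim : U ∉ hUcfin.toFinset.image fun v => ({v} : Set V) := by
    intro h
    obtain ⟨v, _, hv⟩ := Finset.mem_image.mp h
    have : U.ncard = 1 := by rw [← hv]; exact Set.ncard_singleton v
    omega
  have hcard : P.card = Fintype.card V - k + 2 := by
    rw [hP, Finset.card_insert_of_notMem hUnotim, Finset.card_image_of_injective _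
      (fun a b h => Set.singleton_eq_singleton_iff.mp h), ← Set.ncard_eq_toFinset_card _ hUcfin,
      hUc]
  have hcoal : ∀ v ∉ U, KCoalition G k U {v} := by
    intro v hv
    refine ⟨Set.disjoint_singleton_right.mpr hv, ?_, ?_, ?_⟩
    · exact not_kdom_small hv (by omega)
    · obtain ⟨u, hu⟩ := Fintype.exists_ne_of_one_lt_card (by omega) v
      exact not_kdom_small (by simpa using hu) (by rw [Set.ncard_singleton]; omega)
    · intro u hu
      rw [Set.mem_union, Set.mem_singleton_iff] at hu
      push_neg at hu
      have hsub : U ∪ {v} ⊆ G.neighborSet u := by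
        intro x hx
        have hxu : x ≠ u := by
          rintro rfl
          rcases hx with h | h
          · exact hu.1 h
          · exact hu.2 (Set.mem_singleton_iff.mp h)
        exact huniv u hu.1 x hxu
      rw [Set.inter_eq_left.mpr hsub, Set.union_singleton,
        Set.ncard_insert_of_notMem hv U.toFinite]
      omega
  have hUcne : (Uᶜ).Nonempty := by
    rw [← Set.ncard_pos (Set.toFinite _)]
    omega
  obtain ⟨v0, hv0⟩ := hUcne
  refine ⟨P, ⟨?_, ?_, ?_, ?_⟩, hcard⟩
  · intro A hA
    rcases (hmem A).mp hA with rfl | ⟨v, _, rfl⟩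
    · rw [← Set.ncard_pos (Set.toFinite _)]; omega
    · exact Set.singleton_nonempty v
  · intro A hA B hB hAB
    rcases (hmem A).mp hA with rfl | ⟨v, hv, rfl⟩ <;>
      rcases (hmem B).mp hB with rfl | ⟨w, hw, rfl⟩
    · exact absurd rfl hAB
    · exact Set.disjoint_singleton_right.mpr hw
    · exact Set.disjoint_singleton_left.mpr hv
    · exact Set.disjoint_singleton_left.mpr
        fun h => hAB (congrArg _ (Set.mem_singleton_iff.mp h))
  · apply Set.eq_univ_of_forall
    intro x
    simp only [Set.mem_iUnion]
    by_cases hx : x ∈ U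
    · exact ⟨U, (hmem U).mpr (Or.inl rfl), hx⟩
    · exact ⟨{x}, (hmem {x}).mpr (Or.inr ⟨x, hx, rfl⟩), rfl⟩
  · intro A hA
    rcases (hmem A).mp hA with rfl | ⟨v, hv, rfl⟩
    · refine Or.inr ⟨{v0}, (hmem {v0}).mpr (Or.inr ⟨v0, hv0, rfl⟩), ?_, hcoal v0 hv0⟩
      intro h
      have : A.ncard = 1 := by rw [← h]; exact Set.ncard_singleton v0
      omega
    · refine Or.inr ⟨U, (hmem U).mpr (Or.inl rfl), ?_, ?_⟩
      · intro h
        have : U.ncard = 1 := by rw [h]; exact Set.ncard_singleton v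
        omega
      · obtain ⟨hd, h1, h2, h3⟩ := hcoal v hv
        exact ⟨hd.symm, h2, h1, by rwa [Set.union_comm]⟩

lemma partition_of_card_eq (hnk : Fintype.card V = k) (hn : 3 ≤ Fintype.card V) :
    ∃ P : Finset (Set V), KCoalitionPartition G k P ∧ P.card = 2 := by
  classical
  have : Nonempty V := Fintype.card_pos_iff.mp (by omega)
  obtain ⟨v0⟩ := this
  set A : Set V := {v0} with hA
  set B : Set V := {v0}ᶜ with hB
  have hcompl : A.ncard + B.ncard = Fintype.card V := by
    rw [Set.ncard_add_ncard_compl A A.toFinite B.toFinite, Nat.card_eq_fintype_card]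
  have hAcard : A.ncard = 1 := Set.ncard_singleton v0
  have hABne : A ≠ B := by
    intro h
    have : v0 ∈ B := h ▸ Set.mem_singleton v0
    exact this (Set.mem_singleton v0)
  have hcoAB : KCoalition G k A B := by
    refine ⟨disjoint_compl_right, ?_, ?_, ?_⟩
    · obtain ⟨u, hu⟩ := Fintype.exists_ne_of_one_lt_card (by omega) v0
      exact not_kdom_small (v := u) (by simp only [hA, Set.mem_singleton_iff]; exact hu)
        (by omega)
    · exact not_kdom_small (v := v0) (by simp [hB]) (by omega)
    · intro u hu
      rw [Set.union_compl_self] at hu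
      exact absurd (Set.mem_univ u) hu
  refine ⟨{A, B}, ⟨?_, ?_, ?_, ?_⟩, ?_⟩
  · intro C hC
    rcases Finset.mem_insert.mp hC with rfl | hC
    · exact Set.singleton_nonempty v0
    · rw [Finset.mem_singleton.mp hC, ← Set.ncard_pos (Set.toFinite _)]
      omega
  · intro C hC D hD hCD
    simp only [Finset.coe_insert, Finset.coe_singleton, Set.mem_insert_iff,
      Set.mem_singleton_iff] at hC hD
    rcases hC with rfl | rfl <;> rcases hD with rfl | rfl
    · exact absurd rfl hCD
    · exact disjoint_compl_right
    · exact disjoint_compl_left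
    · exact absurd rfl hCD
  · apply Set.eq_univ_of_forall
    intro x
    simp only [Set.mem_iUnion]
    by_cases hx : x ∈ A
    · exact ⟨A, by simp, hx⟩
    · exact ⟨B, by simp, hx⟩
  · intro C hC
    rcases Finset.mem_insert.mp hC with rfl | hC
    · exact Or.inr ⟨B, by simp, hABne.symm, hcoAB⟩
    · rw [Finset.mem_singleton.mp hC]
      refine Or.inr ⟨A, by simp, hABne, ?_⟩
      obtain ⟨hd, h1, h2, h3⟩ := hcoAB
      exact ⟨hd.symm, h2, h1, by rwa [Set.union_comm]⟩
  · rw [Finset.card_insert_of_notMem (by simpa using hABne), Finset.card_singleton]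

lemma subsingleton_parts (Q : Finset (Set V)) (hne : ∀ A ∈ Q, A.Nonempty)
    (hdisj : (Q : Set (Set V)).PairwiseDisjoint id) (T : Set V)
    (hsub : ∀ A ∈ Q, A ⊆ T) (hcard : T.ncard ≤ Q.card) :
    ∀ C ∈ Q, ∀ x ∈ C, ∀ y ∈ C, x = y := by
  classical
  rcases Q.eq_empty_or_nonempty with rfl | ⟨A0, hA0⟩
  · simp
  have hnv : Nonempty V := ⟨(hne A0 hA0).some⟩
  have hft : T.Finite := T.toFinite
  set f : Set V → V := fun A => if h : A.Nonempty then h.some else Classical.arbitrary V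
    with hf
  have hfmem : ∀ A ∈ Q, f A ∈ A := fun A hA => by
    simp only [hf, dif_pos (hne A hA)]; exact (hne A hA).some_mem
  have hinj : Set.InjOn f ↑Q := by
    intro A hA B hB hAB
    by_contra hne'
    have hd := hdisj hA hB hne'
    exact (Set.disjoint_left.mp hd (hfmem A (by simpa using hA)))
      (hAB ▸ hfmem B (by simpa using hB))
  have himage : Q.image f = hft.toFinset := by
    apply Finset.eq_of_subset_of_card_le
    · intro x hx
      obtain ⟨A, hA, rfl⟩ := Finset.mem_image.mp hx
      exact hft.mem_toFinset.mpr (hsub A hA (hfmem A hA))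
    · rw [Finset.card_image_of_injOn hinj, ← Set.ncard_eq_toFinset_card T hft]
      exact hcard
  intro C hC x hx y hy
  have key : ∀ z ∈ C, z = f C := by
    intro z hz
    have hzT : z ∈ Q.image f := himage ▸ hft.mem_toFinset.mpr (hsub C hC hz)
    obtain ⟨D, hD, hDz⟩ := Finset.mem_image.mp hzT
    have hDC : D = C := by
      by_contra hne'
      exact (Set.disjoint_left.mp (hdisj (by simpa using hD) (by simpa using hC) hne')
        (hfmem D hD)) (hDz ▸ hz)
    rw [← hDz, hDC]
  rw [key x hx, key y hy]

lemma structure_lemma {P : Finset (Set V)} (hk3 : 3 ≤ k)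
    (hne : ∀ A ∈ P, A.Nonempty)
    (hdisj : (P : Set (Set V)).PairwiseDisjoint id)
    (hcov : (⋃ A ∈ P, A) = (Set.univ : Set V))
    {X Y : Set V} (hX : X ∈ P) (hY : Y ∈ P) (hXY : X ≠ Y)
    (hdomXY : KDominatingSet G k (X ∪ Y)) (hXYcard : (X ∪ Y).ncard = k)
    (hpart' : ∀ C ∈ P, C ≠ X → C ≠ Y → ∃ v, C = {v} ∧ v ∉ X ∪ Y ∧
      (KDominatingSet G k (X ∪ C) ∨ KDominatingSet G k (Y ∪ C)))
    {C1 : Set V} (hC1 : C1 ∈ P) (hC1X : C1 ≠ X) (hC1Y : C1 ≠ Y)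
    (hdom1 : KDominatingSet G k (X ∪ C1)) :
    X.ncard = k - 1 ∧ ∀ v ∉ X, ∀ u, u ≠ v → G.Adj v u := by
  classical
  have hdXY : Disjoint X Y := hdisj hX hY hXY
  obtain ⟨v1, rfl, hv1XY, -⟩ := hpart' C1 hC1 hC1X hC1Y
  -- X ∪ {v1} is not all of V
  obtain ⟨y, hy⟩ := hne Y hY
  have hyX : y ∉ X := Set.disjoint_right.mp hdXY hy
  have hyv1 : y ≠ v1 := fun h => hv1XY (Set.mem_union_right _ (h ▸ hy))
  have hne1 : X ∪ {v1} ≠ Set.univ := by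
    rw [Ne, Set.eq_univ_iff_forall]
    push_neg
    exact ⟨y, by simp [hyX, hyv1]⟩
  have hv1X : v1 ∉ X := fun h => hv1XY (Set.mem_union_left _ h)
  have hcard1 : (X ∪ {v1}).ncard = X.ncard + 1 := by
    rw [Set.union_singleton, Set.ncard_insert_of_notMem hv1X X.toFinite]
  have hk1 : k ≤ X.ncard + 1 := hcard1 ▸ kdom_ncard_ge hdom1 hne1
  have hsum : X.ncard + Y.ncard = k := by
    rw [← Set.ncard_union_eq hdXY X.toFinite Y.toFinite]
    exact hXYcard
  have hYpos : 1 ≤ Y.ncard := (Set.ncard_pos (Set.toFinite _)).mpr (hne Y hY)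
  have hXcard : X.ncard = k - 1 := by omega
  have hYcard : Y.ncard = 1 := by omega
  obtain ⟨b, rfl⟩ : ∃ b, Y = {b} := Set.ncard_eq_one.mp hYcard
  -- every other part is a singleton forming a dominating set with X
  have hdomC : ∀ C ∈ P, C ≠ X → C ≠ ({b} : Set V) → ∃ v, C = {v} ∧ v ∉ X ∪ {b} ∧
      KDominatingSet G k (X ∪ C) ∧ (X ∪ C).ncard = k := by
    intro C hC hCX hCY
    obtain ⟨v, rfl, hvXY, hdom⟩ := hpart' C hC hCX hCY
    have hvX : v ∉ X := fun h => hvXY (Set.mem_union_left _ h)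
    have hcard' : (X ∪ {v}).ncard = k := by
      rw [Set.union_singleton, Set.ncard_insert_of_notMem hvX X.toFinite, hXcard]
      omega
    rcases hdom with hdom | hdom
    · exact ⟨v, rfl, hvXY, hdom, hcard'⟩
    · exfalso
      obtain ⟨x, hx⟩ := hne X hX
      have hxY : x ∉ ({b} : Set V) := Set.disjoint_left.mp hdXY hx
      have hxv : x ≠ v := fun h => hvXY (Set.mem_union_left _ (h ▸ hx))
      have hne2 : ({b} : Set V) ∪ {v} ≠ Set.univ := by
        rw [Ne, Set.eq_univ_iff_forall]
        push_neg
        refine ⟨x, ?_⟩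
        rw [Set.mem_union, Set.mem_singleton_iff, Set.mem_singleton_iff]
        push_neg
        exact ⟨fun h => hxY (h ▸ rfl), hxv⟩
      have h1 := kdom_ncard_ge hdom hne2
      have h2 : (({b} : Set V) ∪ {v}).ncard ≤ 2 :=
        calc (({b} : Set V) ∪ {v}).ncard ≤ ({b} : Set V).ncard + ({v} : Set V).ncard :=
              Set.ncard_union_le _ _
          _ = 2 := by rw [Set.ncard_singleton, Set.ncard_singleton]
      omega
  -- the vertex cover: every vertex is in a part
  have hpartof : ∀ w : V, ∃ C ∈ P, w ∈ C := by
    intro w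
    have : w ∈ ⋃ A ∈ P, A := hcov.symm ▸ Set.mem_univ w
    simpa using this
  refine ⟨hXcard, ?_⟩
  intro v hv u hu
  have key : ∀ S : Set V, KDominatingSet G k S → S.ncard = k → v ∉ S → u ∈ S →
      G.Adj v u := by
    intro S h1 h2 h3 h4
    exact kdom_subset_nbr h1 h2 h3 h4
  obtain ⟨Cu, hCu, huCu⟩ := hpartof u
  by_cases hCuX : Cu = X
  · -- u ∈ X
    have huX : u ∈ X := hCuX ▸ huCu
    by_cases hvb : v = b
    · -- v = b, u ∈ X: use X ∪ {v0} for the third part C1 = {v1}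
      obtain ⟨w, hw, hwXY, hdomw, hcardw⟩ := hdomC {v1} hC1 hC1X hC1Y
      have hw' : w = v1 := (Set.singleton_eq_singleton_iff.mp hw).symm
      subst hw'
      refine key (X ∪ {w}) hdomw hcardw ?_ (Set.mem_union_left _ huX)
      rw [Set.mem_union, Set.mem_singleton_iff]
      push_neg
      exact ⟨hv, by rw [hvb]; exact fun h => hwXY (Set.mem_union_right _ (h ▸ rfl))⟩
    · -- v ∉ X, v ≠ b: v ∉ X ∪ {b}
      refine key (X ∪ {b}) hdomXY hXYcard ?_ (Set.mem_union_left _ huX)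
      rw [Set.mem_union, Set.mem_singleton_iff]
      push_neg
      exact ⟨hv, hvb⟩
  by_cases hCuY : Cu = ({b} : Set V)
  · -- u = b
    have hub : u = b := Set.mem_singleton_iff.mp (hCuY ▸ huCu)
    by_cases hvb : v = b
    · exact absurd (hub.trans hvb.symm) hu
    · refine key (X ∪ {b}) hdomXY hXYcard ?_
        (Set.mem_union_right _ (Set.mem_singleton_iff.mpr hub))
      rw [Set.mem_union, Set.mem_singleton_iff]
      push_neg
      exact ⟨hv, hvb⟩
  · -- u in a singleton part
    obtain ⟨w, hw, hwXY, hdomw, hcardw⟩ := hdomC Cu hCu hCuX hCuY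
    subst hw
    have hwu : w = u := (Set.mem_singleton_iff.mp huCu).symm
    subst hwu
    refine key (X ∪ {w}) hdomw hcardw ?_ (Set.mem_union_right _ rfl)
    rw [Set.mem_union, Set.mem_singleton_iff]
    push_neg
    exact ⟨hv, fun h => hu h.symm⟩

lemma universal_of_partition {P : Finset (Set V)} (hP : KCoalitionPartition G k P)
    (hcardP : P.card = Fintype.card V - k + 2) (hk3 : 3 ≤ k)
    (hkn : k + 1 ≤ Fintype.card V) :
    ∃ U : Set V, U.ncard = k - 1 ∧ ∀ v ∉ U, ∀ u, u ≠ v → G.Adj v u := by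
  classical
  obtain ⟨hne, hdisj, hcov, hpart⟩ := hP
  have hnodom : ∀ A ∈ P, ¬(KDominatingSet G k A ∧ A.ncard = k) := by
    rintro A hA ⟨hdom, hcardA⟩
    have h1 : (P.erase A).card ≤ (Aᶜ).ncard := by
      refine card_le_ncard_of_disj _ (fun C hC => hne C (Finset.mem_of_mem_erase hC))
        (hdisj.subset (by simp)) _ ?_
      intro C hC
      exact part_subset_compl hdisj hA (Finset.mem_of_mem_erase hC)
        (Finset.ne_of_mem_erase hC)
    have h2 : A.ncard + (Aᶜ).ncard = Fintype.card V := by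
      rw [Set.ncard_add_ncard_compl A A.toFinite (Aᶜ).toFinite, Nat.card_eq_fintype_card]
    have h3 : (P.erase A).card = P.card - 1 := Finset.card_erase_of_mem hA
    have h4 : 1 ≤ P.card := Finset.card_pos.mpr ⟨A, hA⟩
    omega
  have hco : ∀ A ∈ P, ∃ B ∈ P, B ≠ A ∧ KCoalition G k A B := fun A hA =>
    (hpart A hA).resolve_left (hnodom A hA)
  obtain ⟨A, hA⟩ : P.Nonempty := Finset.card_pos.mp (by omega)
  obtain ⟨B, hB, hBA, hcoAB⟩ := hco A hA
  set Q := (P.erase A).erase B with hQ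
  have hB' : B ∈ P.erase A := Finset.mem_erase.mpr ⟨hBA, hB⟩
  have hQcard : Q.card = P.card - 2 := by
    rw [hQ, Finset.card_erase_of_mem hB', Finset.card_erase_of_mem hA]
    omega
  have hQmem : ∀ C, C ∈ Q ↔ C ∈ P ∧ C ≠ A ∧ C ≠ B := by
    intro C
    rw [hQ]
    simp only [Finset.mem_erase]
    tauto
  have hQP : ∀ C ∈ Q, C ∈ P := fun C hC => ((hQmem C).mp hC).1
  have hQsub : ∀ C ∈ Q, C ⊆ (A ∪ B)ᶜ := by
    intro C hC
    obtain ⟨hCP, hCA, hCB⟩ := (hQmem C).mp hC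
    intro x hx
    rw [Set.mem_compl_iff, Set.mem_union]
    push_neg
    exact ⟨part_subset_compl hdisj hA hCP hCA hx, part_subset_compl hdisj hB hCP hCB hx⟩
  have hQdisj : (Q : Set (Set V)).PairwiseDisjoint id := by
    apply hdisj.subset
    intro C hC
    exact hQP C (by simpa using hC)
  have hQnem : Q.Nonempty := Finset.card_pos.mp (by omega)
  obtain ⟨C1, hC1Q⟩ := hQnem
  obtain ⟨hC1P, hC1A, hC1B⟩ := (hQmem C1).mp hC1Q
  have hUnionne : A ∪ B ≠ Set.univ := by
    obtain ⟨c, hc⟩ := hne C1 hC1P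
    rw [Ne, Set.eq_univ_iff_forall]
    push_neg
    exact ⟨c, hQsub C1 hC1Q hc⟩
  have hUk : k ≤ (A ∪ B).ncard := kdom_ncard_ge hcoAB.2.2.2 hUnionne
  have hcomplU : (A ∪ B).ncard + ((A ∪ B)ᶜ).ncard = Fintype.card V := by
    rw [Set.ncard_add_ncard_compl _ (Set.toFinite _) (Set.toFinite _),
      Nat.card_eq_fintype_card]
  have hQle : Q.card ≤ ((A ∪ B)ᶜ).ncard :=
    card_le_ncard_of_disj Q (fun C hC => hne C (hQP C hC)) hQdisj _ hQsub
  have hUcard : (A ∪ B).ncard = k := by omega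
  have hsing : ∀ C ∈ Q, ∀ x ∈ C, ∀ y ∈ C, x = y :=
    subsingleton_parts Q (fun C hC => hne C (hQP C hC)) hQdisj ((A ∪ B)ᶜ) hQsub (by omega)
  have hpart' : ∀ C ∈ P, C ≠ A → C ≠ B → ∃ v, C = {v} ∧ v ∉ A ∪ B ∧
      (KDominatingSet G k (A ∪ C) ∨ KDominatingSet G k (B ∪ C)) := by
    intro C hC hCA hCB
    have hCQ : C ∈ Q := (hQmem C).mpr ⟨hC, hCA, hCB⟩
    obtain ⟨v, hv⟩ := hne C hC
    have hCv : C = {v} :=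
      Set.eq_singleton_iff_unique_mem.mpr ⟨hv, fun y hy => hsing C hCQ y hy v hv⟩
    have hvAB : v ∉ A ∪ B := hQsub C hCQ hv
    refine ⟨v, hCv, hvAB, ?_⟩
    obtain ⟨D, hD, hDC, hcoCD⟩ := hco C hC
    by_cases hDA : D = A
    · left
      rw [← hDA, Set.union_comm]
      exact hcoCD.2.2.2
    by_cases hDB : D = B
    · right
      rw [← hDB, Set.union_comm]
      exact hcoCD.2.2.2
    · exfalso
      have hDQ : D ∈ Q := (hQmem D).mpr ⟨hD, hDA, hDB⟩
      obtain ⟨w, hwD⟩ := hne D hD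
      have hDw : D = {w} :=
        Set.eq_singleton_iff_unique_mem.mpr ⟨hwD, fun y hy => hsing D hDQ y hy w hwD⟩
      have hwAB : w ∉ A ∪ B := hQsub D hDQ hwD
      obtain ⟨a, ha⟩ := hne A hA
      have hpairne : C ∪ D ≠ Set.univ := by
        rw [Ne, Set.eq_univ_iff_forall]
        push_neg
        refine ⟨a, ?_⟩
        rw [hCv, hDw, Set.mem_union, Set.mem_singleton_iff, Set.mem_singleton_iff]
        push_neg
        exact ⟨fun h => hvAB (Set.mem_union_left _ (h ▸ ha)),
          fun h => hwAB (Set.mem_union_left _ (h ▸ ha))⟩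
      have h1 := kdom_ncard_ge hcoCD.2.2.2 hpairne
      have h2 : (C ∪ D).ncard ≤ 2 := by
        rw [hCv, hDw]
        calc (({v} : Set V) ∪ {w}).ncard ≤ ({v} : Set V).ncard + ({w} : Set V).ncard :=
              Set.ncard_union_le _ _
          _ = 2 := by rw [Set.ncard_singleton, Set.ncard_singleton]
      omega
  obtain ⟨v1, hC1v, hv1AB, hdom1⟩ := hpart' C1 hC1P hC1A hC1B
  subst hC1v
  have hABne' : A ≠ B := fun h => hBA h.symm
  rcases hdom1 with hdom1 | hdom1
  · obtain ⟨hXcard, huniv⟩ := structure_lemma hk3 hne hdisj hcov hA hB hABne'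
      hcoAB.2.2.2 hUcard hpart' hC1P hC1A hC1B hdom1
    exact ⟨A, hXcard, huniv⟩
  · have hpart'' : ∀ C ∈ P, C ≠ B → C ≠ A → ∃ v, C = {v} ∧ v ∉ B ∪ A ∧
        (KDominatingSet G k (B ∪ C) ∨ KDominatingSet G k (A ∪ C)) := by
      intro C hC h1 h2
      obtain ⟨v, hv1, hv2, hv3⟩ := hpart' C hC h2 h1
      exact ⟨v, hv1, by rwa [Set.union_comm], hv3.symm⟩
    have hdomBA : KDominatingSet G k (B ∪ A) := by
      rw [Set.union_comm]
      exact hcoAB.2.2.2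
    have hBAcard : (B ∪ A).ncard = k := by rwa [Set.union_comm]
    obtain ⟨hXcard, huniv⟩ := structure_lemma hk3 hne hdisj hcov hB hA hBA
      hdomBA hBAcard hpart'' hC1P hC1B hC1A hdom1
    exact ⟨B, hXcard, huniv⟩

lemma iso_of_universal {U : Set V} (hU : U.ncard = k - 1) (hk3 : 3 ≤ k)
    (hkn : k ≤ Fintype.card V)
    (huniv : ∀ v ∉ U, ∀ u, u ≠ v → G.Adj v u) :
    ∃ H : SimpleGraph (Fin (k - 1)),
      Nonempty (G ≃g graphJoin H (⊤ : SimpleGraph (Fin (Fintype.card V - k + 1)))) := by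
  classical
  have hcompl : U.ncard + (Uᶜ).ncard = Fintype.card V := by
    rw [Set.ncard_add_ncard_compl U U.toFinite (Uᶜ).toFinite, Nat.card_eq_fintype_card]
  haveI : Fintype ↥U := Fintype.ofFinite _
  haveI : Fintype ↥(Uᶜ) := Fintype.ofFinite _
  have h1 : Fintype.card ↥U = k - 1 := by
    rw [← Nat.card_eq_fintype_card, Nat.card_coe_set_eq, hU]
  have h2 : Fintype.card ↥(Uᶜ) = Fintype.card V - k + 1 := by
    rw [← Nat.card_eq_fintype_card, Nat.card_coe_set_eq]
    omega
  set eU : ↥U ≃ Fin (k - 1) := Fintype.equivFinOfCardEq h1 with heU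
  set eC : ↥(Uᶜ) ≃ Fin (Fintype.card V - k + 1) := Fintype.equivFinOfCardEq h2 with heC
  set e : V ≃ (Fin (k - 1) ⊕ Fin (Fintype.card V - k + 1)) :=
    (Equiv.Set.sumCompl U).symm.trans (Equiv.sumCongr eU eC) with he
  have hinl : ∀ i, e.symm (Sum.inl i) ∈ U := by
    intro i
    rw [he]
    simp only [Equiv.symm_trans_apply, Equiv.symm_symm, Equiv.sumCongr_symm,
      Equiv.sumCongr_apply, Sum.map_inl, Equiv.Set.sumCompl_apply_inl]
    exact (eU.symm i).2
  have hinr : ∀ j, e.symm (Sum.inr j) ∉ U := by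
    intro j
    rw [he]
    simp only [Equiv.symm_trans_apply, Equiv.symm_symm, Equiv.sumCongr_symm,
      Equiv.sumCongr_apply, Sum.map_inr, Equiv.Set.sumCompl_apply_inr]
    exact (eC.symm j).2
  refine ⟨SimpleGraph.comap (fun i => e.symm (Sum.inl i)) G, ⟨⟨e, ?_⟩⟩⟩
  intro a b
  have hsa : e.symm (e a) = a := e.symm_apply_apply a
  have hsb : e.symm (e b) = b := e.symm_apply_apply b
  rcases ha : e a with i | j <;> rcases hb : e b with i' | j'
  · rw [graphJoin_adj_inl_inl, SimpleGraph.comap_adj]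
    rw [ha] at hsa
    rw [hb] at hsb
    rw [hsa, hsb]
  · have hbU : b ∉ U := by rw [hb] at hsb; exact hsb ▸ hinr j'
    have hab : a ≠ b := by
      intro h
      rw [h, hb] at ha
      cases ha
    simp only [graphJoin_adj_inl_inr, true_iff]
    exact (huniv b hbU a hab).symm
  · have haU : a ∉ U := by rw [ha] at hsa; exact hsa ▸ hinr j
    have hab : b ≠ a := by
      intro h
      rw [h, ha] at hb
      cases hb
    simp only [graphJoin_adj_inr_inl, true_iff]
    exact huniv a haU b hab
  · have haU : a ∉ U := by rw [ha] at hsa; exact hsa ▸ hinr j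
    rw [graphJoin_adj_inr_inr, SimpleGraph.top_adj]
    constructor
    · intro hjj
      have hab : b ≠ a := by
        intro h
        rw [h, ha] at hb
        exact hjj (Sum.inr.inj hb.symm).symm
      exact huniv a haU b hab
    · intro hadj hjj
      have : a = b := e.injective (by rw [ha, hb, hjj])
      exact hadj.ne this

end Aux

theorem kCoalitionNumber_eq_iff {V : Type*} [Fintype V] (G : SimpleGraph V) (k : ℕ)
    (hn : 3 ≤ Fintype.card V) (hk3 : 3 ≤ k) (hkn : k ≤ Fintype.card V) :
    kCoalitionNumber G k = Fintype.card V - k + 2 ↔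
      Fintype.card V = k ∨
        ∃ H : SimpleGraph (Fin (k - 1)),
          Nonempty (G ≃g graphJoin H (⊤ : SimpleGraph (Fin (Fintype.card V - k + 1)))) := by
  classical
  constructor
  · intro hval
    by_cases hnk : Fintype.card V = k
    · exact Or.inl hnk
    · right
      have hk1n : k + 1 ≤ Fintype.card V := by omega
      set s := {n | ∃ P : Finset (Set V), KCoalitionPartition G k P ∧ P.card = n} with hs
      have hbdd : BddAbove s := ⟨Fintype.card V - k + 2, fun m hm => by
        obtain ⟨P, hP, rfl⟩ := hm
        exact partition_card_le hP hk3 hkn⟩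
      have hsne : s.Nonempty := by
        by_contra hempty
        rw [Set.not_nonempty_iff_eq_empty] at hempty
        have h0 : kCoalitionNumber G k = 0 := by
          rw [kCoalitionNumber, ← hs, hempty, csSup_empty]
          rfl
        omega
      have hmem : kCoalitionNumber G k ∈ s := by
        rw [kCoalitionNumber, ← hs]
        exact Nat.sSup_mem hsne hbdd
      rw [hval] at hmem
      obtain ⟨P, hP, hPcard⟩ := hmem
      obtain ⟨U, hU, huniv⟩ := universal_of_partition hP hPcard hk3 hk1n
      exact iso_of_universal hU hk3 hkn huniv
  · rintro (hnk | ⟨H, ⟨φ⟩⟩)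
    · obtain ⟨P, hP, hPcard⟩ := partition_of_card_eq (G := G) hnk hn
      have h2 : Fintype.card V - k + 2 = 2 := by omega
      rw [h2, kCoalitionNumber]
      apply IsGreatest.csSup_eq
      refine ⟨⟨P, hP, hPcard⟩, ?_⟩
      intro m hm
      obtain ⟨P', hP', rfl⟩ := hm
      have := partition_card_le hP' hk3 hkn
      omega
    · obtain ⟨U, hU, huniv⟩ := universal_of_iso hk3 φ
      obtain ⟨P, hP, hPcard⟩ := partition_of_universal hU hk3 hkn hn huniv
      rw [kCoalitionNumber]
      apply IsGreatest.csSup_eq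
      refine ⟨⟨P, hP, hPcard⟩, ?_⟩
      intro m hm
      obtain ⟨P', hP', rfl⟩ := hm
      exact partition_card_le hP' hk3 hkn
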